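/- For fixed i < j, the probability that a sequence of independent fair coin bits C_0,…,C_{t+n−1} has an n-long repeat starting at positions i and j that agrees in all but at most one position (i.e., the Hamming distance between (C_i,…,C_{i+n−1}) and (C_j,…,C_{j+n−1}) is at most 1) is at most (n+1)·2^{−n}. -/
import Mathlib

open Finset

lemma card_filter_fin' (n : ℕ) (p : ℕ → Prop) [DecidablePred p] :
    ((Finset.univ : Finset (Fin n)).filter fun ℓ => p ℓ.val).card
      = ((Finset.range n).filter p).card := by
  rw [Finset.card_filter, Finset.card_filter]
  exact Fin.sum_univ_eq_sum_range (fun ℓ => if p ℓ then 1 else 0) n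

lemma weight_le_one_card' (n : ℕ) :
    ((Finset.univ : Finset (Fin n → Bool)).filter
      (fun X => ((Finset.univ.filter fun ℓ => X ℓ = true)).card ≤ 1)).card ≤ n + 1 := by
  classical
  have hsub : ((Finset.univ : Finset (Fin n → Bool)).filter
      (fun X => ((Finset.univ.filter fun ℓ => X ℓ = true)).card ≤ 1))
      ⊆ insert (fun _ => false)
          ((Finset.univ : Finset (Fin n)).image (fun a ℓ => decide (ℓ = a))) := by
    intro X hX
    simp only [Finset.mem_filter, Finset.mem_univ, true_and] at hX
    rcases Nat.le_one_iff_eq_zero_or_eq_one.mp hX with h0 | h1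
    · have hall : ∀ ℓ, X ℓ = false := by
        intro ℓ
        by_contra hℓ
        have hmem : ℓ ∈ (Finset.univ.filter fun ℓ => X ℓ = true) := by
          simp [Bool.not_eq_false] at hℓ; simp [hℓ]
        rw [Finset.card_eq_zero.mp h0] at hmem
        exact absurd hmem (Finset.notMem_empty _)
      have : X = fun _ => false := funext hall
      rw [this]
      exact Finset.mem_insert_self _ _
    · obtain ⟨a, ha⟩ := Finset.card_eq_one.mp h1
      have key : ∀ ℓ, X ℓ = true ↔ ℓ = a := by
        intro ℓ
        have := Finset.ext_iff.mp ha ℓ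
        simpa using this
      have : X = fun ℓ => decide (ℓ = a) := by
        funext ℓ
        cases hb : X ℓ
        · have : ℓ ≠ a := fun h => by simp [(key ℓ).mpr h] at hb
          simp [this]
        · simp [(key ℓ).mp hb]
      rw [this]
      exact Finset.mem_insert_of_mem (Finset.mem_image.mpr ⟨a, Finset.mem_univ a, rfl⟩)
  calc _ ≤ _ := Finset.card_le_card hsub
    _ ≤ ((Finset.univ : Finset (Fin n)).image (fun a ℓ => decide (ℓ = a))).card + 1 :=
        Finset.card_insert_le _ _
    _ ≤ (Finset.univ : Finset (Fin n)).card + 1 :=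
        Nat.add_le_add_right (Finset.card_image_le) 1
    _ = n + 1 := by simp

theorem stmt11 (n t i j : ℕ) (hij : i < j) (hjn : j + n ≤ t + n) :
    ((Finset.univ : Finset (Fin (t + n) → Bool)).filter
        (fun C =>
          let D : ℕ → Bool := fun a => if h : a < t + n then C ⟨a, h⟩ else false
          ((Finset.range n).filter (fun ℓ => D (i + ℓ) ≠ D (j + ℓ))).card ≤ 1)).card
        * 2 ^ n
      ≤ (n + 1) * 2 ^ (t + n) := by
  classical
  have hjt : j ≤ t := by omega
  set D : (Fin (t + n) → Bool) → ℕ → Bool :=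
    fun C a => if h : a < t + n then C ⟨a, h⟩ else false with hD
  set S := ((Finset.univ : Finset (Fin (t + n) → Bool)).filter
        (fun C =>
          let D : ℕ → Bool := fun a => if h : a < t + n then C ⟨a, h⟩ else false
          ((Finset.range n).filter (fun ℓ => D (i + ℓ) ≠ D (j + ℓ))).card ≤ 1)) with hS
  set A := ((Finset.univ : Finset (Fin n → Bool)).filter
      (fun X => ((Finset.univ.filter fun ℓ => X ℓ = true)).card ≤ 1)) with hA
  set emb : Fin t → Fin (t + n) := fun k =>
    if h : (k : ℕ) < j then ⟨k, by omega⟩ else ⟨(k : ℕ) + n, by omega⟩ with hemb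
  set f : (Fin (t + n) → Bool) → (Fin n → Bool) × (Fin t → Bool) :=
    fun C => (fun ℓ => decide (D C (i + ℓ) ≠ D C (j + ℓ)), fun k => C (emb k)) with hf
  have hmaps : ∀ C ∈ S, f C ∈ A ×ˢ (Finset.univ : Finset (Fin t → Bool)) := by
    intro C hC
    rw [hS, Finset.mem_filter] at hC
    rw [Finset.mem_product]
    refine ⟨?_, Finset.mem_univ _⟩
    rw [hA, Finset.mem_filter]
    refine ⟨Finset.mem_univ _, ?_⟩
    have : ((Finset.univ : Finset (Fin n)).filter fun ℓ => (f C).1 ℓ = true).card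
        = ((Finset.range n).filter (fun ℓ => D C (i + ℓ) ≠ D C (j + ℓ))).card := by
      rw [← card_filter_fin' n (fun ℓ => D C (i + ℓ) ≠ D C (j + ℓ))]
      congr 1
      ext ℓ
      simp [hf]
    rw [this]
    exact hC.2
  have hinj : Set.InjOn f S := by
    intro C _ C' _ h
    have h1 : ∀ ℓ : Fin n,
        (decide (D C (i + ℓ) ≠ D C (j + ℓ)) : Bool)
          = decide (D C' (i + ℓ) ≠ D C' (j + ℓ)) :=
      fun ℓ => congrFun (congrArg Prod.fst h) ℓ
    have h2 : ∀ k : Fin t, C (emb k) = C' (emb k) :=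
      fun k => congrFun (congrArg Prod.snd h) k
    funext a
    obtain ⟨a, ha⟩ := a
    induction a using Nat.strong_induction_on with
    | _ a IH =>
    rcases lt_or_ge a j with hlt | hge
    · have hh := h2 ⟨a, by omega⟩
      rw [hemb] at hh
      simpa [hlt] using hh
    rcases lt_or_ge a (j + n) with hlt2 | hge2
    · have hℓ : a - j < n := by omega
      have hx := h1 ⟨a - j, hℓ⟩
      have hja : j + (a - j) = a := by omega
      have hiaN : i + (a - j) < t + n := by omega
      have hIH : C ⟨i + (a - j), hiaN⟩ = C' ⟨i + (a - j), hiaN⟩ :=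
        IH (i + (a - j)) (by omega) hiaN
      simp only [hD, Fin.val_mk, hja, dif_pos hiaN, dif_pos ha] at hx
      rw [hIH] at hx
      revert hx
      cases C' ⟨i + (a - j), hiaN⟩ <;> cases hb : C ⟨a, ha⟩ <;>
        cases hb' : C' ⟨a, ha⟩ <;> simp
    · have hk : a - n < t := by omega
      have hh := h2 ⟨a - n, hk⟩
      have heq : emb ⟨a - n, hk⟩ = ⟨a, ha⟩ := by
        have hnot : ¬ ((⟨a - n, hk⟩ : Fin t) : ℕ) < j := by simp; omega
        simp only [hemb, dif_neg hnot]
        ext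
        simp
        omega
      rwa [heq] at hh
  have hcard : S.card ≤ (A ×ˢ (Finset.univ : Finset (Fin t → Bool))).card :=
    Finset.card_le_card_of_injOn f hmaps hinj
  have hAcard : A.card ≤ n + 1 := weight_le_one_card' n
  have huniv : (Finset.univ : Finset (Fin t → Bool)).card = 2 ^ t := by
    simp [Finset.card_univ]
  have : S.card ≤ (n + 1) * 2 ^ t := by
    calc S.card ≤ (A ×ˢ (Finset.univ : Finset (Fin t → Bool))).card := hcard
      _ = A.card * 2 ^ t := by rw [Finset.card_product, huniv]
      _ ≤ (n + 1) * 2 ^ t := Nat.mul_le_mul_right _ hAcard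
  calc S.card * 2 ^ n ≤ (n + 1) * 2 ^ t * 2 ^ n := Nat.mul_le_mul_right _ this
    _ = (n + 1) * 2 ^ (t + n) := by rw [mul_assoc, ← pow_add]
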